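/- Let ω be a finite positive Borel measure on [0,1) satisfying ω̂(0) ≤ C₀·ω̂(1/2), and suppose there exists C > 0 such that the moments satisfy ω_n ≤ C·ω_{2n} for all positive integers n, where ω_x = ∫₀¹ r^x dω(r). Then there exists C' > 0 such that ∫₀¹ s^x dω(s) ≤ C'·ω̂(1-1/x) for all x ≥ 1. -/

import Mathlib

open MeasureTheory Set

private lemma stmt8_intOn_pow (ω : Measure ℝ) [IsFiniteMeasure ω] (m : ℕ) {s : Set ℝ}
    (hs : s ⊆ Ico (0:ℝ) 1) : IntegrableOn (fun r : ℝ => r ^ m) s ω := by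
  apply IntegrableOn.mono_set _ hs
  apply Measure.integrableOn_of_bounded (M := 1) (measure_ne_top ω _)
    (continuous_pow m).aestronglyMeasurable
  filter_upwards [ae_restrict_mem measurableSet_Ico] with r hr
  rw [Real.norm_eq_abs, abs_of_nonneg (pow_nonneg hr.1 _)]
  exact pow_le_one₀ hr.1 hr.2.le

private lemma stmt8_intOn_rpow (ω : Measure ℝ) [IsFiniteMeasure ω] {x : ℝ} (hx : 0 < x) :
    IntegrableOn (fun r : ℝ => r ^ x) (Ico (0:ℝ) 1) ω := by
  apply Measure.integrableOn_of_bounded (M := 1) (measure_ne_top ω _)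
    (Real.continuous_rpow_const hx.le).aestronglyMeasurable
  filter_upwards [ae_restrict_mem measurableSet_Ico] with r hr
  rw [Real.norm_eq_abs, abs_of_nonneg (Real.rpow_nonneg hr.1 _)]
  exact Real.rpow_le_one hr.1 hr.2.le hx.le

private lemma stmt8_pow_exp (k n : ℕ) (hn : 1 ≤ n) :
    ((1:ℝ) - 1/n) ^ ((2^k - 1) * n) ≤ Real.exp (-((2:ℝ)^k - 1)) := by
  have hn0 : (0:ℝ) < n := by exact_mod_cast hn
  have h0 : (0:ℝ) ≤ 1 - 1/n := by
    rw [sub_nonneg, div_le_one hn0]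
    exact_mod_cast hn
  have hle : (1:ℝ) - 1/n ≤ Real.exp (-(1/n)) := by
    linarith [Real.add_one_le_exp (-(1/(n:ℝ)))]
  calc ((1:ℝ) - 1/n) ^ ((2^k - 1) * n) ≤ (Real.exp (-(1/n))) ^ ((2^k - 1) * n) :=
        pow_le_pow_left₀ h0 hle _
    _ = Real.exp ((((2^k - 1) * n : ℕ) : ℝ) * (-(1/n))) := by rw [Real.exp_nat_mul]
    _ = Real.exp (-((2:ℝ)^k - 1)) := by
        congr 1
        have h2k : 1 ≤ 2^k := Nat.one_le_two_pow
        push_cast [h2k]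
        field_simp

private lemma stmt8_exists_k (C : ℝ) (hC : 0 < C) :
    ∃ k : ℕ, C^k * Real.exp (-((2:ℝ)^k - 1)) ≤ 1/2 := by
  set N : ℕ := max 2 ⌈Real.log C⌉₊ with hN
  have hN2 : 2 ≤ N := le_max_left _ _
  refine ⟨N + N^2, ?_⟩
  set k := N + N^2 with hk
  have hnat : k * N + 2 ≤ 2^k := by
    have h1 : N + 1 ≤ 2^N := Nat.lt_two_pow_self (n := N)
    have h2 : N^2 + 1 ≤ 2^(N^2) := Nat.lt_two_pow_self
    calc k * N + 2 = N^2 + N^3 + 2 := by ring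
    _ ≤ (N+1) * (N^2+1) := by nlinarith
    _ ≤ 2^N * 2^(N^2) := Nat.mul_le_mul h1 h2
    _ = 2^k := by rw [hk, pow_add]
  have hlogN : Real.log C ≤ (N : ℝ) :=
    le_trans (Nat.le_ceil _) (by exact_mod_cast Nat.cast_le.mpr (le_max_right 2 _))
  have hCk : C ^ k = Real.exp (k * Real.log C) := by
    rw [Real.exp_nat_mul, Real.exp_log hC]
  have hcast : ((k * N + 2 : ℕ) : ℝ) ≤ ((2^k : ℕ) : ℝ) := by exact_mod_cast hnat
  push_cast at hcast
  have key : (k : ℝ) * Real.log C - ((2:ℝ)^k - 1) ≤ -1 := by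
    have : (k:ℝ) * Real.log C ≤ (k:ℝ) * N :=
      mul_le_mul_of_nonneg_left hlogN (by positivity)
    linarith
  rw [hCk, ← Real.exp_add]
  have h1 : Real.exp ((k:ℝ) * Real.log C + -((2:ℝ)^k - 1)) ≤ Real.exp (-1) :=
    Real.exp_le_exp.mpr (by linarith)
  refine h1.trans ?_
  rw [Real.exp_neg]
  have h2e : (2:ℝ) ≤ Real.exp 1 := by linarith [Real.add_one_le_exp (1:ℝ)]
  rw [div_eq_mul_inv, one_mul]
  exact inv_anti₀ (by norm_num) h2e

theorem stmt_8 (ω : Measure ℝ) [IsFiniteMeasure ω] (C₀ C : ℝ) (hC₀ : 0 < C₀) (hC : 0 < C)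
    (hcero : (ω (Ico (0 : ℝ) 1)).toReal ≤ C₀ * (ω (Ico (1 / 2 : ℝ) 1)).toReal)
    (hmom : ∀ n : ℕ, 1 ≤ n →
      (∫ r in Ico (0 : ℝ) 1, r ^ (n : ℝ) ∂ω) ≤ C * (∫ r in Ico (0 : ℝ) 1, r ^ (2 * n : ℝ) ∂ω)) :
    ∃ C' : ℝ, 0 < C' ∧ ∀ x : ℝ, 1 ≤ x →
      (∫ s in Ico (0 : ℝ) 1, s ^ x ∂ω) ≤ C' * (ω (Ico (1 - 1 / x) 1)).toReal := by
  -- notation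
  set J : ℕ → ℝ := fun m => ∫ r in Ico (0:ℝ) 1, r ^ m ∂ω with hJ
  set W : ℝ → ℝ := fun a => (ω (Ico a 1)).toReal with hW
  have hJnonneg : ∀ m, 0 ≤ J m := fun m =>
    setIntegral_nonneg measurableSet_Ico (fun r hr => pow_nonneg hr.1 m)
  have hWnonneg : ∀ a, 0 ≤ W a := fun a => ENNReal.toReal_nonneg
  have hmom' : ∀ n : ℕ, 1 ≤ n → J n ≤ C * J (2 * n) := by
    intro n hn
    have := hmom n hn
    have e1 : (∫ r in Ico (0:ℝ) 1, r ^ (n:ℝ) ∂ω) = J n := by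
      simp only [hJ]
      exact setIntegral_congr_fun measurableSet_Ico fun r _ => Real.rpow_natCast r n
    have e2 : (∫ r in Ico (0:ℝ) 1, r ^ (2 * (n:ℝ)) ∂ω) = J (2 * n) := by
      simp only [hJ]
      refine setIntegral_congr_fun measurableSet_Ico fun r _ => ?_
      rw [show (2 * (n:ℝ)) = ((2 * n : ℕ) : ℝ) by push_cast; ring, Real.rpow_natCast]
    rw [e1, e2] at this
    exact this
  -- iterate
  have hiter : ∀ k n : ℕ, 1 ≤ n → J n ≤ C ^ k * J (2 ^ k * n) := by
    intro k
    induction k with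
    | zero => intro n hn; simpa using le_refl (J n)
    | succ k ih =>
      intro n hn
      have h1 := ih n hn
      have h2 := hmom' (2 ^ k * n) (Nat.mul_pos (pow_pos (by norm_num) k) hn)
      calc J n ≤ C ^ k * J (2 ^ k * n) := h1
        _ ≤ C ^ k * (C * J (2 * (2 ^ k * n))) :=
          mul_le_mul_of_nonneg_left h2 (by positivity)
        _ = C ^ (k + 1) * J (2 ^ (k + 1) * n) := by ring_nf
  obtain ⟨k, hk⟩ := stmt8_exists_k C hC
  -- main lemma
  have M1 : ∀ n : ℕ, 1 ≤ n → J n ≤ 2 * C ^ k * W (1 - 1 / n) := by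
    intro n hn
    have hn0 : (0:ℝ) < n := by exact_mod_cast hn
    set a : ℝ := 1 - 1 / n with ha
    have ha0 : 0 ≤ a := by
      rw [ha, sub_nonneg, div_le_one hn0]; exact_mod_cast hn
    have ha1 : a ≤ 1 := by
      rw [ha]; nlinarith [one_div_pos.mpr hn0]
    set m : ℕ := 2 ^ k * n with hm
    have hnm : n ≤ m := Nat.le_mul_of_pos_left n (by positivity)
    have hsplit : J m = (∫ r in Ico (0:ℝ) a, r ^ m ∂ω) + (∫ r in Ico a 1, r ^ m ∂ω) := by
      simp only [hJ]
      rw [← setIntegral_union Ico_disjoint_Ico_same measurableSet_Ico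
        (stmt8_intOn_pow ω m (Ico_subset_Ico_right ha1))
        (stmt8_intOn_pow ω m (Ico_subset_Ico_left ha0)),
        Ico_union_Ico_eq_Ico ha0 ha1]
    have hup : (∫ r in Ico a 1, r ^ m ∂ω) ≤ W a := by
      have := setIntegral_mono_on (stmt8_intOn_pow ω m (Ico_subset_Ico_left ha0))
        ((integrableOn_const_iff).mpr (Or.inr (measure_lt_top ω _))) measurableSet_Ico
        (fun r hr => pow_le_one₀ (le_trans ha0 hr.1) hr.2.le (n := m))
      simpa [hW, Measure.real] using this
    have hlow : (∫ r in Ico (0:ℝ) a, r ^ m ∂ω) ≤ a ^ (m - n) * J n := by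
      have step1 : (∫ r in Ico (0:ℝ) a, r ^ m ∂ω) ≤
          ∫ r in Ico (0:ℝ) a, a ^ (m - n) * r ^ n ∂ω := by
        apply setIntegral_mono_on (stmt8_intOn_pow ω m (Ico_subset_Ico_right ha1))
          ((stmt8_intOn_pow ω n (Ico_subset_Ico_right ha1)).const_mul _) measurableSet_Ico
        intro r hr
        have : r ^ m = r ^ (m - n) * r ^ n := by
          rw [← pow_add, Nat.sub_add_cancel hnm]
        rw [this]
        exact mul_le_mul_of_nonneg_right (pow_le_pow_left₀ hr.1 hr.2.le _)
          (pow_nonneg hr.1 n)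
      have step2 : (∫ r in Ico (0:ℝ) a, a ^ (m - n) * r ^ n ∂ω) = a ^ (m - n) *
          ∫ r in Ico (0:ℝ) a, r ^ n ∂ω := by
        exact integral_const_mul _ _
      have step3 : (∫ r in Ico (0:ℝ) a, r ^ n ∂ω) ≤ J n := by
        apply setIntegral_mono_set (stmt8_intOn_pow ω n (subset_refl _))
        · filter_upwards [ae_restrict_mem measurableSet_Ico] with r hr
          exact pow_nonneg hr.1 n
        · exact HasSubset.Subset.eventuallyLE (Ico_subset_Ico_right ha1)
      calc (∫ r in Ico (0:ℝ) a, r ^ m ∂ω) ≤ a ^ (m - n) * ∫ r in Ico (0:ℝ) a, r ^ n ∂ω := by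
            rw [← step2]; exact step1
        _ ≤ a ^ (m - n) * J n := mul_le_mul_of_nonneg_left step3 (pow_nonneg ha0 _)
    have hexp : a ^ (m - n) ≤ Real.exp (-((2:ℝ)^k - 1)) := by
      have : m - n = (2 ^ k - 1) * n := by
        rw [hm, Nat.sub_mul, one_mul]
      rw [this, ha]
      exact stmt8_pow_exp k n hn
    have key : J n ≤ C ^ k * (Real.exp (-((2:ℝ)^k - 1)) * J n + W a) := by
      have h1 := hiter k n hn
      have h2 : J m ≤ Real.exp (-((2:ℝ)^k - 1)) * J n + W a := by
        rw [hsplit]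
        have := mul_le_mul_of_nonneg_right hexp (hJnonneg n)
        have hlow' : (∫ r in Ico (0:ℝ) a, r ^ m ∂ω) ≤ Real.exp (-((2:ℝ)^k - 1)) * J n :=
          le_trans hlow this
        linarith
      calc J n ≤ C ^ k * J m := h1
        _ ≤ _ := mul_le_mul_of_nonneg_left h2 (by positivity)
    have hCk : (0:ℝ) < C ^ k := by positivity
    have hhalf : C ^ k * Real.exp (-((2:ℝ)^k - 1)) ≤ 1/2 := hk
    have expos : (0:ℝ) < Real.exp (-((2:ℝ)^k - 1)) := Real.exp_pos _
    nlinarith [hJnonneg n, hWnonneg a, mul_le_mul_of_nonneg_right hhalf (hJnonneg n)]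
  -- step to 2n
  have M2 : ∀ n : ℕ, 1 ≤ n → J n ≤ 2 * C ^ (k+1) * W (1 - 1 / (2 * n)) := by
    intro n hn
    have h1 := hmom' n hn
    have h2 := M1 (2 * n) (Nat.mul_pos (by norm_num) hn)
    have : ((2 * n : ℕ) : ℝ) = 2 * (n : ℝ) := by push_cast; ring
    rw [this] at h2
    calc J n ≤ C * J (2 * n) := h1
      _ ≤ C * (2 * C ^ k * W (1 - 1 / (2 * n))) := mul_le_mul_of_nonneg_left h2 hC.le
      _ = 2 * C ^ (k+1) * W (1 - 1 / (2 * n)) := by ring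
  refine ⟨2 * C ^ (k+1), by positivity, ?_⟩
  intro x hx
  have hx0 : (0:ℝ) < x := lt_of_lt_of_le one_pos hx
  set n : ℕ := ⌊x⌋₊ with hn
  have hn1 : 1 ≤ n := by
    rw [hn]
    exact Nat.le_floor (by exact_mod_cast hx)
  have hnx : (n : ℝ) ≤ x := Nat.floor_le hx0.le
  have hxn : x < n + 1 := Nat.lt_floor_add_one x
  have hn0 : (0:ℝ) < n := by exact_mod_cast hn1
  have hx2n : x ≤ 2 * (n:ℝ) := by
    have : (1:ℝ) ≤ n := by exact_mod_cast hn1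
    linarith
  -- ∫ s^x ≤ J n
  have hstep1 : (∫ s in Ico (0:ℝ) 1, s ^ x ∂ω) ≤ J n := by
    apply setIntegral_mono_on (stmt8_intOn_rpow ω hx0)
      (stmt8_intOn_pow ω n (subset_refl _)) measurableSet_Ico
    intro s hs
    rcases eq_or_lt_of_le hs.1 with h | h
    · rw [← h, Real.zero_rpow (by positivity), zero_pow (by omega)]
    · calc s ^ x ≤ s ^ ((n:ℕ):ℝ) := Real.rpow_le_rpow_of_exponent_ge h hs.2.le hnx
        _ = s ^ (n:ℕ) := Real.rpow_natCast s n
  have hstep2 : W (1 - 1 / (2 * (n:ℝ))) ≤ W (1 - 1 / x) := by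
    apply ENNReal.toReal_mono (measure_ne_top ω _)
    apply measure_mono
    apply Ico_subset_Ico_left
    have h1 : 1 / (2 * (n:ℝ)) ≤ 1 / x := one_div_le_one_div_of_le hx0 hx2n
    linarith
  calc (∫ s in Ico (0:ℝ) 1, s ^ x ∂ω) ≤ J n := hstep1
    _ ≤ 2 * C ^ (k+1) * W (1 - 1 / (2 * n)) := M2 n hn1
    _ ≤ 2 * C ^ (k+1) * W (1 - 1 / x) :=
      mul_le_mul_of_nonneg_left hstep2 (by positivity)
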